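/- Let Γ_L = (𝒜₀, 𝒜₁, …, 𝒜_L) be an access structure on share indices {1, …, n} with ∅ ∈ 𝒜₀. Then there exist a finite field F, a nonempty finite randomness set R, finite share-value sets W₁, …, W_n, and a sharing map Φ : F^L × R → W₁ × ⋯ × W_n that is a strong ramp secret sharing scheme for Γ_L if and only if Ã_ℓ is monotone for every ℓ ∈ {1, …, L}. -/

import Mathlib

/-! Shared definitions: ramp secret sharing schemes with general access structures.

A sharing map `Φ : (Fin L → F) → R → (∀ i : Fin n, W i)` encodes a secret
`s : Fin L → F` together with a uniform random input `r : R` into `n` shares. -/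

section Defs

variable {F : Type*} {L n : ℕ} {R : Type*} {W : Fin n → Type*}

/-- The index set `I ⊆ {1,…,L}` is explicitly decrypted by the share set `A`:
the shares with index in `A` determine the coordinates of the secret in `I`. -/
def ExplicitlyDecrypted (Φ : (Fin L → F) → R → ∀ i, W i) (A : Finset (Fin n))
    (I : Finset (Fin L)) : Prop :=
  ∀ s r s' r', (∀ i ∈ A, Φ s r i = Φ s' r' i) → ∀ j ∈ I, s j = s' j

/-- The index set `J ⊆ {1,…,L}` is perfectly hidden from the share set `A`:
for every value `w` of the shares in `A`, all assignments of the coordinates of the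
secret in `J` are compatible with `w` in equally many ways (the counting equivalent,
for uniform inputs, of `H(S_J | Φ_A) = H(S_J)`). -/
def PerfectlyHidden (Φ : (Fin L → F) → R → ∀ i, W i) (A : Finset (Fin n))
    (J : Finset (Fin L)) : Prop :=
  ∀ (w : ∀ i, W i) (x x' : Fin L → F),
    Nat.card {p : (Fin L → F) × R //
        (∀ i ∈ A, Φ p.1 p.2 i = w i) ∧ ∀ j ∈ J, p.1 j = x j} =
    Nat.card {p : (Fin L → F) × R //
        (∀ i ∈ A, Φ p.1 p.2 i = w i) ∧ ∀ j ∈ J, p.1 j = x' j}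

/-- `𝒜 0, 𝒜 1, …, 𝒜 L` form an access structure: the families are pairwise
disjoint and their union is the full power set of `{1,…,n}`. -/
def IsAccessStructure {L n : ℕ} (𝒜 : Fin (L + 1) → Set (Finset (Fin n))) : Prop :=
  (∀ ℓ ℓ' : Fin (L + 1), ℓ ≠ ℓ' → 𝒜 ℓ ∩ 𝒜 ℓ' = ∅) ∧
    ∀ A : Finset (Fin n), ∃ ℓ, A ∈ 𝒜 ℓ

/-- Membership in `Ã_ℓ = 𝒜_ℓ ∪ 𝒜_{ℓ+1} ∪ ⋯ ∪ 𝒜_L`. -/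
def TildeMem {L n : ℕ} (𝒜 : Fin (L + 1) → Set (Finset (Fin n))) (ℓ : Fin (L + 1))
    (A : Finset (Fin n)) : Prop :=
  ∃ k, ℓ ≤ k ∧ A ∈ 𝒜 k

/-- `Ã_ℓ` is monotone: supersets of members are members. -/
def TildeMonotone {L n : ℕ} (𝒜 : Fin (L + 1) → Set (Finset (Fin n)))
    (ℓ : Fin (L + 1)) : Prop :=
  ∀ A A' : Finset (Fin n), TildeMem 𝒜 ℓ A → A ⊆ A' → TildeMem 𝒜 ℓ A'

/-- `Φ` is a partially decryptable (PD) ramp secret sharing scheme for the access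
structure `𝒜`: every `A ∈ 𝒜 ℓ` explicitly decrypts some index set `I` of size `ℓ`
while the complementary part of the secret stays perfectly hidden. -/
def IsPDRampScheme (Φ : (Fin L → F) → R → ∀ i, W i)
    (𝒜 : Fin (L + 1) → Set (Finset (Fin n))) : Prop :=
  ∀ (ℓ : Fin (L + 1)) (A : Finset (Fin n)), A ∈ 𝒜 ℓ →
    ∃ I : Finset (Fin L), I.card = (ℓ : ℕ) ∧
      ExplicitlyDecrypted Φ A I ∧ PerfectlyHidden Φ A Iᶜ

/-- `Φ` is a strong ramp secret sharing scheme for the access structure `𝒜`: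
every `A ∈ 𝒜 L` decrypts the whole secret, and every `A ∈ 𝒜 ℓ` with `ℓ < L`
(i) perfectly hides every set of `L - ℓ` coordinates of the secret, and
(ii) leaks exactly `(ℓ/L)·H(S)`: every attained share value `w` on `A` is
compatible with exactly `|F|^(L-ℓ)` secrets, each in equally many ways. -/
def IsStrongRampScheme (Φ : (Fin L → F) → R → ∀ i, W i)
    (𝒜 : Fin (L + 1) → Set (Finset (Fin n))) : Prop :=
  (∀ A ∈ 𝒜 (Fin.last L), ∀ s r s' r',
      (∀ i ∈ A, Φ s r i = Φ s' r' i) → s = s') ∧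
  ∀ ℓ : Fin (L + 1), (ℓ : ℕ) < L → ∀ A ∈ 𝒜 ℓ,
    (∀ J : Finset (Fin L), J.card = L - (ℓ : ℕ) → PerfectlyHidden Φ A J) ∧
    ∀ w : ∀ i, W i, (∃ s r, ∀ i ∈ A, Φ s r i = w i) →
      (Nat.card {s : Fin L → F // ∃ r, ∀ i ∈ A, Φ s r i = w i}
          = Nat.card F ^ (L - (ℓ : ℕ))) ∧
      ∀ s s' : Fin L → F, (∃ r, ∀ i ∈ A, Φ s r i = w i) →
        (∃ r, ∀ i ∈ A, Φ s' r i = w i) →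
        Nat.card {r : R // ∀ i ∈ A, Φ s r i = w i}
          = Nat.card {r : R // ∀ i ∈ A, Φ s' r i = w i}

end Defs


noncomputable section RampConstruction
open Finset

variable {L n p : ℕ}

/-- Row `ℓ` of the (transposed) Vandermonde transform of the secret. -/
def tmap (s : Fin L → ZMod p) (ℓ : Fin L) : ZMod p :=
  ∑ j : Fin L, ((j : ℕ) : ZMod p) ^ (ℓ : ℕ) * s j

lemma tmap_add (s s' : Fin L → ZMod p) (ℓ : Fin L) :
    tmap (s + s') ℓ = tmap s ℓ + tmap s' ℓ := by
  simp [tmap, mul_add, Finset.sum_add_distrib]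

lemma tmap_sub (s s' : Fin L → ZMod p) (ℓ : Fin L) :
    tmap (s - s') ℓ = tmap s ℓ - tmap s' ℓ := by
  simp [tmap, mul_sub, Finset.sum_sub_distrib]

section Vandermonde

variable [Fact p.Prime]

lemma cast_inj_of_lt (hp : L ≤ p) {a b : Fin L}
    (h : ((a : ℕ) : ZMod p) = ((b : ℕ) : ZMod p)) : a = b := by
  have h1 := ZMod.val_cast_of_lt (lt_of_lt_of_le a.isLt hp)
  have h2 := ZMod.val_cast_of_lt (lt_of_lt_of_le b.isLt hp)
  exact Fin.ext (by rw [← h1, ← h2, h])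

lemma vsolve (hp : L ≤ p) {q : ℕ} (hq : q ≤ L) (J : Finset (Fin L))
    (hJ : J.card = L - q) (y : Fin L → ZMod p) :
    ∃ d : Fin L → ZMod p, (∀ ℓ : Fin L, (ℓ : ℕ) < q → tmap d ℓ = 0) ∧
      ∀ j ∈ J, d j = y j := by
  classical
  have hK : Jᶜ.card = q := by
    rw [Finset.card_compl, hJ, Fintype.card_fin]; omega
  set K := Jᶜ with hKdef
  let oi := K.orderIsoOfFin hK
  set v : Fin q → ZMod p := fun m => (((oi m : Fin L) : ℕ) : ZMod p) with hv
  have hvinj : Function.Injective v := by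
    intro a b hab
    exact oi.injective (Subtype.ext (cast_inj_of_lt hp hab))
  set M : Matrix (Fin q) (Fin q) (ZMod p) := (Matrix.vandermonde v).transpose with hM
  have hdet : M.det ≠ 0 := by
    rw [hM, Matrix.det_transpose]
    exact Matrix.det_vandermonde_ne_zero_iff.2 hvinj
  set b : Fin q → ZMod p := fun a => - ∑ j ∈ J, ((j : ℕ) : ZMod p) ^ (a : ℕ) * y j with hb
  set c : Fin q → ZMod p := M⁻¹.mulVec b with hc
  have hMc : M.mulVec c = b := by
    rw [hc, Matrix.mulVec_mulVec, Matrix.mul_nonsing_inv M (isUnit_iff_ne_zero.2 hdet),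
      Matrix.one_mulVec]
  set d : Fin L → ZMod p := fun j => if h : j ∈ K then c (oi.symm ⟨j, h⟩) else y j with hd
  have hKimg : K = Finset.image (fun m : Fin q => ((oi m : Fin L))) Finset.univ := by
    ext j
    simp only [Finset.mem_image, Finset.mem_univ, true_and]
    constructor
    · intro hj; exact ⟨oi.symm ⟨j, hj⟩, by simp⟩
    · rintro ⟨m, rfl⟩; exact (oi m).2
  have himg : ∀ f : Fin L → ZMod p, ∑ j ∈ K, f j = ∑ m : Fin q, f ((oi m : Fin L)) :=
    fun f => (Finset.sum_congr hKimg fun _ _ => rfl).trans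
      (Finset.sum_image fun x _ x' _ h => oi.injective (Subtype.ext h))
  have hdK : ∀ m : Fin q, d ((oi m : Fin L)) = c m := by
    intro m
    have hm : ((oi m : Fin L)) ∈ K := (oi m).2
    rw [hd]
    simp only
    rw [dif_pos hm]
    congr 1
    rw [show (⟨(oi m : Fin L), hm⟩ : {x // x ∈ K}) = oi m from rfl, OrderIso.symm_apply_apply]
  refine ⟨d, ?_, ?_⟩
  · intro ℓ hℓ
    have hsplit := Finset.sum_add_sum_compl J
      (fun j => ((j : ℕ) : ZMod p) ^ (ℓ : ℕ) * d j)
    have hJpart : ∑ j ∈ J, ((j : ℕ) : ZMod p) ^ (ℓ : ℕ) * d j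
        = ∑ j ∈ J, ((j : ℕ) : ZMod p) ^ (ℓ : ℕ) * y j := by
      refine Finset.sum_congr rfl fun j hj => ?_
      rw [hd]; simp only
      rw [dif_neg (by simp [hKdef, hj])]
    have hKpart : ∑ j ∈ K, ((j : ℕ) : ZMod p) ^ (ℓ : ℕ) * d j
        = M.mulVec c ⟨(ℓ : ℕ), hℓ⟩ := by
      rw [himg, show M.mulVec c ⟨(ℓ : ℕ), hℓ⟩ = ∑ m : Fin q, v m ^ (ℓ : ℕ) * c m by
        simp [Matrix.mulVec, dotProduct, hM, Matrix.vandermonde]]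
      exact Finset.sum_congr rfl fun m _ => by rw [hdK m]
    have : tmap d ℓ = ∑ j ∈ J, ((j : ℕ) : ZMod p) ^ (ℓ : ℕ) * d j
        + ∑ j ∈ K, ((j : ℕ) : ZMod p) ^ (ℓ : ℕ) * d j := by
      rw [hsplit]; rfl
    rw [this, hJpart, hKpart, hMc, hb]
    ring
  · intro j hj
    rw [hd]; simp only
    rw [dif_neg (by simp [hKdef, hj])]

lemma vunique (hp : L ≤ p) {q : ℕ} (hq : q ≤ L) (J : Finset (Fin L))
    (hJ : J.card = L - q) (d : Fin L → ZMod p) (h0 : ∀ j ∈ J, d j = 0)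
    (ht : ∀ ℓ : Fin L, (ℓ : ℕ) < q → tmap d ℓ = 0) : d = 0 := by
  classical
  have hK : Jᶜ.card = q := by
    rw [Finset.card_compl, hJ, Fintype.card_fin]; omega
  set K := Jᶜ with hKdef
  let oi := K.orderIsoOfFin hK
  set v : Fin q → ZMod p := fun m => (((oi m : Fin L) : ℕ) : ZMod p) with hv
  have hvinj : Function.Injective v := by
    intro a b hab
    exact oi.injective (Subtype.ext (cast_inj_of_lt hp hab))
  set M : Matrix (Fin q) (Fin q) (ZMod p) := (Matrix.vandermonde v).transpose with hM
  have hdet : M.det ≠ 0 := by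
    rw [hM, Matrix.det_transpose]
    exact Matrix.det_vandermonde_ne_zero_iff.2 hvinj
  have hKimg : K = Finset.image (fun m : Fin q => ((oi m : Fin L))) Finset.univ := by
    ext j
    simp only [Finset.mem_image, Finset.mem_univ, true_and]
    constructor
    · intro hj; exact ⟨oi.symm ⟨j, hj⟩, by simp⟩
    · rintro ⟨m, rfl⟩; exact (oi m).2
  have himg : ∀ f : Fin L → ZMod p, ∑ j ∈ K, f j = ∑ m : Fin q, f ((oi m : Fin L)) :=
    fun f => (Finset.sum_congr hKimg fun _ _ => rfl).trans
      (Finset.sum_image fun x _ x' _ h => oi.injective (Subtype.ext h))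
  have hzero : M.mulVec (fun m => d ((oi m : Fin L))) = 0 := by
    funext a
    have hsplit := Finset.sum_add_sum_compl J
      (fun j => ((j : ℕ) : ZMod p) ^ (a : ℕ) * d j)
    have hJ0 : ∑ j ∈ J, ((j : ℕ) : ZMod p) ^ (a : ℕ) * d j = 0 :=
      Finset.sum_eq_zero fun j hj => by rw [h0 j hj, mul_zero]
    have hKpart : M.mulVec (fun m => d ((oi m : Fin L))) a
        = ∑ j ∈ K, ((j : ℕ) : ZMod p) ^ (a : ℕ) * d j := by
      rw [himg]
      simp [Matrix.mulVec, dotProduct, hM, Matrix.vandermonde, hv]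
    have htm : tmap d ⟨(a : ℕ), lt_of_lt_of_le a.isLt hq⟩ = 0 := ht _ a.isLt
    have : tmap d ⟨(a : ℕ), lt_of_lt_of_le a.isLt hq⟩
        = ∑ j ∈ J, ((j : ℕ) : ZMod p) ^ (a : ℕ) * d j
          + ∑ j ∈ K, ((j : ℕ) : ZMod p) ^ (a : ℕ) * d j := by
      rw [hsplit]; rfl
    rw [Pi.zero_apply, hKpart]
    rw [this, hJ0, zero_add] at htm
    exact htm
  have hdz := Matrix.eq_zero_of_mulVec_eq_zero hdet hzero
  funext j
  by_cases hj : j ∈ K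
  · have := congrFun hdz (oi.symm ⟨j, hj⟩)
    simpa using this
  · exact h0 j (by simpa [hKdef] using hj)

end Vandermonde

section Scheme

variable (𝒜 : Fin (L + 1) → Set (Finset (Fin n)))

open Classical in
/-- Sets that are NOT qualified at level `ℓ+1`. -/
def USet (ℓ : Fin L) : Finset (Finset (Fin n)) :=
  Finset.univ.filter fun B => ¬ TildeMem 𝒜 ℓ.succ B

lemma mem_USet {ℓ : Fin L} {B : Finset (Fin n)} :
    B ∈ USet 𝒜 ℓ ↔ ¬ TildeMem 𝒜 ℓ.succ B := by
  classical
  simp [USet]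

/-- additive-share values -/
def xval (s : Fin L → ZMod p) (r : Fin L → Finset (Fin n) → ZMod p)
    (ℓ : Fin L) (B : Finset (Fin n)) : ZMod p :=
  if B = ∅ then tmap s ℓ - ∑ B' ∈ (USet 𝒜 ℓ).erase ∅, r ℓ B' else r ℓ B

open Classical in
/-- The sharing map. -/
def Phi (s : Fin L → ZMod p) (r : Fin L → Finset (Fin n) → ZMod p)
    (i : Fin n) : Fin L → Finset (Fin n) → ZMod p :=
  fun ℓ B => if B ∈ USet 𝒜 ℓ ∧ i ∉ B then xval 𝒜 s r ℓ B else 0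

/-- randomness adjustment used in all bijections -/
def delta (A : Finset (Fin n)) (k : Fin (L + 1)) (d : Fin L → ZMod p) :
    Fin L → Finset (Fin n) → ZMod p :=
  fun ℓ B => if B = A ∧ (k : ℕ) ≤ (ℓ : ℕ) then tmap d ℓ else 0

variable {𝒜}

lemma Amem_unique (hAS : IsAccessStructure 𝒜) {A : Finset (Fin n)}
    {k k' : Fin (L + 1)} (h : A ∈ 𝒜 k) (h' : A ∈ 𝒜 k') : k = k' := by
  by_contra hne
  exact Set.eq_empty_iff_forall_notMem.mp (hAS.1 k k' hne) A ⟨h, h'⟩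

lemma empty_mem_USet (hAS : IsAccessStructure 𝒜)
    (hempty : (∅ : Finset (Fin n)) ∈ 𝒜 0) (ℓ : Fin L) : ∅ ∈ USet 𝒜 ℓ := by
  rw [mem_USet]
  rintro ⟨k, hk, hmem⟩
  have hk0 : k = 0 := Amem_unique hAS hmem hempty
  subst hk0
  have : (ℓ : ℕ) + 1 ≤ 0 := by simpa [Fin.le_def] using hk
  omega

lemma claimQ (hmono : ∀ ℓ : Fin (L + 1), 1 ≤ (ℓ : ℕ) → TildeMonotone 𝒜 ℓ)
    {A : Finset (Fin n)} {k : Fin (L + 1)} (hA : A ∈ 𝒜 k) {ℓ : Fin L}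
    (hℓ : (ℓ : ℕ) < (k : ℕ)) {B : Finset (Fin n)} (hB : B ∈ USet 𝒜 ℓ) :
    ¬ A ⊆ B := by
  intro hAB
  rw [mem_USet] at hB
  exact hB (hmono ℓ.succ (by simp) A B ⟨k, by simp [Fin.le_def]; omega, hA⟩ hAB)

lemma claimH (hAS : IsAccessStructure 𝒜) {A : Finset (Fin n)} {k : Fin (L + 1)}
    (hA : A ∈ 𝒜 k) {ℓ : Fin L} (hℓ : (k : ℕ) ≤ (ℓ : ℕ)) : A ∈ USet 𝒜 ℓ := by
  rw [mem_USet]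
  rintro ⟨k', hk', hmem⟩
  have hkk : k' = k := Amem_unique hAS hmem hA
  rw [hkk] at hk'
  have : (ℓ : ℕ) + 1 ≤ (k : ℕ) := by simpa [Fin.le_def] using hk'
  omega

lemma sum_xval (hAS : IsAccessStructure 𝒜)
    (hempty : (∅ : Finset (Fin n)) ∈ 𝒜 0) (s : Fin L → ZMod p)
    (r : Fin L → Finset (Fin n) → ZMod p) (ℓ : Fin L) :
    ∑ B ∈ USet 𝒜 ℓ, xval 𝒜 s r ℓ B = tmap s ℓ := by
  classical
  rw [← Finset.sum_erase_add _ _ (empty_mem_USet hAS hempty ℓ)]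
  have h1 : ∑ B ∈ (USet 𝒜 ℓ).erase ∅, xval 𝒜 s r ℓ B
      = ∑ B ∈ (USet 𝒜 ℓ).erase ∅, r ℓ B := by
    refine Finset.sum_congr rfl fun B hB => ?_
    rw [xval, if_neg (Finset.mem_erase.1 hB).1]
  have h2 : xval 𝒜 s r ℓ (∅ : Finset (Fin n))
      = tmap s ℓ - ∑ B' ∈ (USet 𝒜 ℓ).erase ∅, r ℓ B' := by
    rw [xval, if_pos rfl]
  rw [h1, h2]
  abel

lemma delta_sum (hAS : IsAccessStructure 𝒜) {A : Finset (Fin n)}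
    {k : Fin (L + 1)} (hA : A ∈ 𝒜 k) (hAne : A ≠ ∅)
    (d : Fin L → ZMod p) (hd : ∀ m : Fin L, (m : ℕ) < (k : ℕ) → tmap d m = 0)
    (ℓ : Fin L) :
    ∑ B' ∈ (USet 𝒜 ℓ).erase ∅, delta A k d ℓ B' = tmap d ℓ := by
  classical
  rcases le_or_gt (k : ℕ) (ℓ : ℕ) with hk | hk
  · have hmem : A ∈ (USet 𝒜 ℓ).erase ∅ :=
      Finset.mem_erase.2 ⟨hAne, claimH hAS hA hk⟩
    rw [show (∑ B' ∈ (USet 𝒜 ℓ).erase ∅, delta A k d ℓ B')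
        = ∑ B' ∈ (USet 𝒜 ℓ).erase ∅, if B' = A then tmap d ℓ else 0 from
      Finset.sum_congr rfl fun B' _ => by simp [delta, hk]]
    rw [Finset.sum_ite_eq' _ A fun _ => tmap d ℓ]
    simp [hmem]
  · have h0 : tmap d ℓ = 0 := hd ℓ (lt_of_lt_of_le hk (by omega))
    rw [h0]
    refine Finset.sum_eq_zero fun B' _ => ?_
    simp [delta, not_le.2 hk]

lemma shift_eq (hAS : IsAccessStructure 𝒜)
    (hmono : ∀ ℓ : Fin (L + 1), 1 ≤ (ℓ : ℕ) → TildeMonotone 𝒜 ℓ)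
    {A : Finset (Fin n)} {k : Fin (L + 1)} (hA : A ∈ 𝒜 k)
    (d : Fin L → ZMod p) (hd : ∀ m : Fin L, (m : ℕ) < (k : ℕ) → tmap d m = 0)
    (s : Fin L → ZMod p) (r : Fin L → Finset (Fin n) → ZMod p)
    {i : Fin n} (hi : i ∈ A) :
    Phi 𝒜 (s + d) (r + delta A k d) i = Phi 𝒜 s r i := by
  classical
  funext ℓ B
  rw [Phi, Phi]
  by_cases hcond : B ∈ USet 𝒜 ℓ ∧ i ∉ B
  · rw [if_pos hcond, if_pos hcond]
    by_cases hB : B = (∅ : Finset (Fin n))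
    · subst hB
      have hAne : A ≠ ∅ := by
        intro h; rw [h] at hi; exact absurd hi (Finset.notMem_empty i)
      rw [xval, xval, if_pos rfl, if_pos rfl]
      have hsum : ∑ B' ∈ (USet 𝒜 ℓ).erase ∅, (r + delta A k d) ℓ B'
          = (∑ B' ∈ (USet 𝒜 ℓ).erase ∅, r ℓ B') + tmap d ℓ := by
        rw [show (∑ B' ∈ (USet 𝒜 ℓ).erase ∅, (r + delta A k d) ℓ B')
            = ∑ B' ∈ (USet 𝒜 ℓ).erase ∅, (r ℓ B' + delta A k d ℓ B') from
          Finset.sum_congr rfl fun B' _ => rfl]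
        rw [Finset.sum_add_distrib, delta_sum hAS hA hAne d hd ℓ]
      rw [hsum, tmap_add]
      abel
    · rw [xval, xval, if_neg hB, if_neg hB]
      have hBA : B ≠ A := by
        intro h; rw [h] at hcond; exact hcond.2 hi
      show r ℓ B + delta A k d ℓ B = r ℓ B
      rw [delta, if_neg (by simp [hBA]), add_zero]
  · rw [if_neg hcond, if_neg hcond]

lemma tmap_eq_of_shares (hAS : IsAccessStructure 𝒜)
    (hempty : (∅ : Finset (Fin n)) ∈ 𝒜 0)
    (hmono : ∀ ℓ : Fin (L + 1), 1 ≤ (ℓ : ℕ) → TildeMonotone 𝒜 ℓ)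
    {A : Finset (Fin n)} {k : Fin (L + 1)} (hA : A ∈ 𝒜 k)
    {s s' : Fin L → ZMod p} {r r' : Fin L → Finset (Fin n) → ZMod p}
    (hw : ∀ i ∈ A, Phi 𝒜 s r i = Phi 𝒜 s' r' i)
    {ℓ : Fin L} (hℓ : (ℓ : ℕ) < (k : ℕ)) : tmap s ℓ = tmap s' ℓ := by
  classical
  have hx : ∀ B ∈ USet 𝒜 ℓ, xval 𝒜 s r ℓ B = xval 𝒜 s' r' ℓ B := by
    intro B hB
    obtain ⟨i, hiA, hiB⟩ := Finset.not_subset.1 (claimQ hmono hA hℓ hB)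
    have h := congrFun (congrFun (hw i hiA) ℓ) B
    rw [Phi, Phi, if_pos ⟨hB, hiB⟩, if_pos ⟨hB, hiB⟩] at h
    exact h
  rw [← sum_xval hAS hempty s r ℓ, ← sum_xval hAS hempty s' r' ℓ]
  exact Finset.sum_congr rfl hx

end Scheme

end RampConstruction

/-- For an access structure `Γ_L = (𝒜₀, …, 𝒜_L)` on share indices
`{1,…,n}` with `∅ ∈ 𝒜₀`, there exist a finite field `F`, a nonempty finite
randomness set `R`, finite share-value sets `W₁, …, W_n` and a sharing map
`Φ : F^L × R → W₁ × ⋯ × W_n` that is a strong ramp secret sharing scheme for `Γ_L`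
if and only if `Ã_ℓ` is monotone for every `ℓ ∈ {1,…,L}`. -/
theorem strong_ramp_scheme_exists_iff_monotone (L n : ℕ) (hL : 0 < L) (hn : 0 < n)
    (𝒜 : Fin (L + 1) → Set (Finset (Fin n))) (hAS : IsAccessStructure 𝒜)
    (hempty : (∅ : Finset (Fin n)) ∈ 𝒜 0) :
    (∃ (F : Type) (_ : Field F) (_ : Fintype F) (R : Type) (_ : Fintype R)
        (_ : Nonempty R) (W : Fin n → Type) (_ : ∀ i, Fintype (W i))
        (Φ : (Fin L → F) → R → ∀ i, W i), IsStrongRampScheme Φ 𝒜) ↔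
      ∀ ℓ : Fin (L + 1), 1 ≤ (ℓ : ℕ) → TildeMonotone 𝒜 ℓ := by
  constructor
  · rintro ⟨F, _, _, R, _, hR, W, _, Φ, hΦ⟩ ℓ₀ hℓ₀ A A' hA hsub
    obtain ⟨k, hk, hAk⟩ := hA
    obtain ⟨k', hAk'⟩ := hAS.2 A'
    refine ⟨k', ?_, hAk'⟩
    by_contra hlt
    rw [not_le] at hlt
    have hk'k : (k' : ℕ) < (k : ℕ) := Fin.lt_def.mp (lt_of_lt_of_le hlt hk)
    have hkL : (k : ℕ) ≤ L := by have := k.isLt; omega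
    have hk'L : (k' : ℕ) < L := by omega
    obtain ⟨r₀⟩ := hR
    have hF1 : 1 < Nat.card F := by
      rw [Nat.card_eq_fintype_card]; exact Fintype.one_lt_card
    set s₀ : Fin L → F := fun _ => 0 with hs₀def
    set w : ∀ i, W i := Φ s₀ r₀ with hwdef
    have h2 := ((hΦ.2 k' hk'L A' hAk').2 w ⟨s₀, r₀, fun _ _ => rfl⟩).1
    have hle : Nat.card {s : Fin L → F // ∃ r, ∀ i ∈ A', Φ s r i = w i}
        ≤ Nat.card {s : Fin L → F // ∃ r, ∀ i ∈ A, Φ s r i = w i} := by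
      refine Nat.card_le_card_of_injective
        (fun z => ⟨z.1, z.2.elim fun r hr => ⟨r, fun i hi => hr i (hsub hi)⟩⟩) ?_
      intro a b hab
      have h' := congrArg Subtype.val hab
      simp only at h'
      exact Subtype.ext h' 
    rw [h2] at hle
    by_cases hkLeq : (k : ℕ) = L
    · have hklast : k = Fin.last L := Fin.ext (by simp [Fin.val_last, hkLeq])
      rw [hklast] at hAk
      haveI : Subsingleton {s : Fin L → F // ∃ r, ∀ i ∈ A, Φ s r i = w i} := by
        constructor
        rintro ⟨s, r, hr⟩ ⟨s', r', hr'⟩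
        exact Subtype.ext (hΦ.1 A hAk s r s' r' fun i hi => (hr i hi).trans (hr' i hi).symm)
      haveI : Nonempty {s : Fin L → F // ∃ r, ∀ i ∈ A, Φ s r i = w i} :=
        ⟨⟨s₀, r₀, fun _ _ => rfl⟩⟩
      have hone : Nat.card {s : Fin L → F // ∃ r, ∀ i ∈ A, Φ s r i = w i} = 1 :=
        Nat.card_unique
      rw [hone] at hle
      have : 1 < Nat.card F ^ (L - (k' : ℕ)) := Nat.one_lt_pow (by omega) hF1
      omega
    · have hkLlt : (k : ℕ) < L := lt_of_le_of_ne hkL hkLeq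
      have h3 := ((hΦ.2 k hkLlt A hAk).2 w ⟨s₀, r₀, fun _ _ => rfl⟩).1
      rw [h3] at hle
      have := (Nat.pow_le_pow_iff_right hF1).mp hle
      omega
  · intro hmono
    obtain ⟨p, hpL, hp⟩ := Nat.exists_infinite_primes (L + 1)
    haveI : Fact p.Prime := ⟨hp⟩
    have hLp : L ≤ p := by omega
    refine ⟨ZMod p, inferInstance, inferInstance,
      (Fin L → Finset (Fin n) → ZMod p), inferInstance, inferInstance,
      (fun _ => Fin L → Finset (Fin n) → ZMod p), fun _ => inferInstance,
      Phi 𝒜, ?_, ?_⟩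
    · intro A hA s r s' r' hw
      have hd : ∀ m : Fin L, (m : ℕ) < L → tmap (s - s') m = 0 := by
        intro m _
        have := tmap_eq_of_shares hAS hempty hmono hA hw
          (ℓ := m) (by rw [Fin.val_last]; exact m.isLt)
        rw [tmap_sub, this, sub_self]
      have hz := vunique hLp (le_refl L) (∅ : Finset (Fin L)) (by simp) (s - s')
        (by simp) hd
      exact sub_eq_zero.mp hz
    · intro ℓ hℓL A hA
      constructor
      · -- perfect hiding
        intro J hJ w x x'
        obtain ⟨d, hd, hdJ⟩ := vsolve hLp (le_of_lt hℓL) J hJ (x' - x)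
        refine Nat.card_congr (Equiv.subtypeEquiv
          (Equiv.addRight ((d, delta A ℓ d) :
            (Fin L → ZMod p) × (Fin L → Finset (Fin n) → ZMod p))) fun pr => ?_)
        simp only [Equiv.coe_addRight, Prod.fst_add, Prod.snd_add]
        have hshift : ∀ i ∈ A, Phi 𝒜 (pr.1 + d) (pr.2 + delta A ℓ d) i
            = Phi 𝒜 pr.1 pr.2 i :=
          fun i hi => shift_eq hAS hmono hA d hd pr.1 pr.2 hi
        constructor
        · rintro ⟨h1, h2⟩
          refine ⟨fun i hi => ?_, fun j hj => ?_⟩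
          · rw [hshift i hi]; exact h1 i hi
          · rw [Pi.add_apply, h2 j hj, hdJ j hj, Pi.sub_apply]; ring
        · rintro ⟨h1, h2⟩
          refine ⟨fun i hi => ?_, fun j hj => ?_⟩
          · rw [← hshift i hi]; exact h1 i hi
          · have hh := h2 j hj
            rw [Pi.add_apply, hdJ j hj, Pi.sub_apply] at hh
            linear_combination hh
      · -- entropy condition
        intro w hwatt
        obtain ⟨s₀, r₀, hs₀⟩ := hwatt
        have key : ∀ s : Fin L → ZMod p,
            (∃ r, ∀ i ∈ A, Phi 𝒜 s r i = w i) ↔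
            (∀ m : Fin L, (m : ℕ) < (ℓ : ℕ) → tmap (s - s₀) m = 0) := by
          intro s
          constructor
          · rintro ⟨r, hr⟩ m hm
            have := tmap_eq_of_shares hAS hempty hmono hA
              (fun i hi => (hr i hi).trans (hs₀ i hi).symm) hm
            rw [tmap_sub, this, sub_self]
          · intro hdm
            refine ⟨r₀ + delta A ℓ (s - s₀), fun i hi => ?_⟩
            have h := shift_eq hAS hmono hA (s - s₀) hdm s₀ r₀ hi
            rw [show s₀ + (s - s₀) = s by ring] at h
            rw [h]; exact hs₀ i hi
        constructor
        · -- cardinality of compatible secrets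
          have e1 : {s : Fin L → ZMod p // ∃ r, ∀ i ∈ A, Phi 𝒜 s r i = w i} ≃
              {d : Fin L → ZMod p //
                ∀ m : Fin L, (m : ℕ) < (ℓ : ℕ) → tmap d m = 0} :=
            Equiv.subtypeEquiv (Equiv.subRight s₀) fun s => by
              simpa [Equiv.subRight_apply] using key s
          set J₀ : Finset (Fin L) :=
            Finset.univ.filter (fun j => (ℓ : ℕ) ≤ (j : ℕ)) with hJ₀def
          have hJ₀ : J₀.card = L - (ℓ : ℕ) := by
            have hJeq : J₀ = Finset.map
                ⟨fun m : Fin (L - (ℓ : ℕ)) =>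
                  (⟨(ℓ : ℕ) + (m : ℕ), by have := m.isLt; omega⟩ : Fin L),
                 fun a b h => by
                  have hv : (ℓ : ℕ) + (a : ℕ) = (ℓ : ℕ) + (b : ℕ) :=
                    congrArg Fin.val h
                  exact Fin.ext (by omega)⟩ Finset.univ := by
              ext j
              simp only [hJ₀def, Finset.mem_filter, Finset.mem_univ, true_and,
                Finset.mem_map, Function.Embedding.coeFn_mk]
              constructor
              · intro hjge
                exact ⟨⟨(j : ℕ) - (ℓ : ℕ), by have := j.isLt; omega⟩,
                  Fin.ext (by show (ℓ : ℕ) + ((j : ℕ) - (ℓ : ℕ)) = j; omega)⟩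
              · rintro ⟨m, rfl⟩
                show (ℓ : ℕ) ≤ (ℓ : ℕ) + (m : ℕ); omega
            rw [hJeq, Finset.card_map, Finset.card_univ, Fintype.card_fin]
          have hbij : Function.Bijective
              (fun (d : {d : Fin L → ZMod p //
                ∀ m : Fin L, (m : ℕ) < (ℓ : ℕ) → tmap d m = 0}) =>
                (fun m : Fin (L - (ℓ : ℕ)) =>
                  d.1 ⟨(ℓ : ℕ) + (m : ℕ), by have := m.isLt; omega⟩)) := by
            constructor
            · rintro ⟨d, hdc⟩ ⟨d', hd'c⟩ hdd
              refine Subtype.ext (sub_eq_zero.mp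
                (vunique hLp (le_of_lt hℓL) J₀ hJ₀ (d - d') ?_ ?_))
              · intro j hj
                have hjge : (ℓ : ℕ) ≤ (j : ℕ) := by
                  simpa [hJ₀def] using hj
                have hm := congrFun hdd
                  ⟨(j : ℕ) - (ℓ : ℕ), by have := j.isLt; omega⟩
                simp only at hm
                have hjj : (⟨(ℓ : ℕ) + ((j : ℕ) - (ℓ : ℕ)),
                    by have := j.isLt; omega⟩ : Fin L) = j :=
                  Fin.ext (by simp; omega)
                rw [hjj] at hm
                rw [Pi.sub_apply, hm, sub_self]
              · intro m hm
                rw [tmap_sub, hdc m hm, hd'c m hm, sub_self]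
            · intro y
              obtain ⟨d, hd, hdJ⟩ := vsolve hLp (le_of_lt hℓL) J₀ hJ₀
                (fun j => if h : (ℓ : ℕ) ≤ (j : ℕ) then
                  y ⟨(j : ℕ) - (ℓ : ℕ), by have := j.isLt; omega⟩ else 0)
              refine ⟨⟨d, hd⟩, funext fun m => ?_⟩
              have hmem : (⟨(ℓ : ℕ) + (m : ℕ), by have := m.isLt; omega⟩ : Fin L)
                  ∈ J₀ := by simp [hJ₀def]
              simp only
              rw [hdJ _ hmem, dif_pos (by simp : (ℓ : ℕ) ≤ (ℓ : ℕ) + (m : ℕ))]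
              congr 1
              exact Fin.ext (by simp)
          rw [Nat.card_congr (e1.trans (Equiv.ofBijective _ hbij))]
          simp [Nat.card_fun]
        · -- equal multiplicities
          intro s s' hs hs'
          have hd : ∀ m : Fin L, (m : ℕ) < (ℓ : ℕ) → tmap (s' - s) m = 0 := by
            intro m hm
            have h1 := (key s).1 hs m hm
            have h2 := (key s').1 hs' m hm
            have hdec : s' - s = (s' - s₀) - (s - s₀) := by ring
            rw [hdec, tmap_sub, h1, h2, sub_self]
          refine Nat.card_congr (Equiv.subtypeEquiv
            (Equiv.addRight (delta A ℓ (s' - s))) fun r => ?_)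
          simp only [Equiv.coe_addRight]
          constructor
          · intro h1 i hi
            have h := shift_eq hAS hmono hA (s' - s) hd s r hi
            rw [show s + (s' - s) = s' by ring] at h
            rw [h]; exact h1 i hi
          · intro h1 i hi
            have h := shift_eq hAS hmono hA (s' - s) hd s r hi
            rw [show s + (s' - s) = s' by ring] at h
            rw [← h]; exact h1 i hi
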